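/- For every finite subset A of ℤⁿ, with Ā = A + [0,1]ⁿ ⊆ ℝⁿ and Q = [0,1]ⁿ, and for every x ∈ ℝⁿ, one has g_{Ā}(x) = Σ_{z ∈ ℤⁿ} |A ∩ (A + z)| · g_Q(z + x) (the sum has only finitely many nonzero terms). -/

import Mathlib

open MeasureTheory Topology Filter Set Pointwise

/-- The covariogram of a set `A ⊆ ℝⁿ`: `g_A(x) = λₙ(A ∩ (A + x))`. -/
noncomputable def covariogram {n : ℕ} (A : Set (EuclideanSpace ℝ (Fin n)))
    (x : EuclideanSpace ℝ (Fin n)) : ℝ :=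
  (volume (A ∩ ((· + x) '' A))).toReal

/-- The embedding of the integer lattice `ℤⁿ` into `ℝⁿ`. -/
def latticeEmbed {n : ℕ} (z : Fin n → ℤ) : EuclideanSpace ℝ (Fin n) :=
  WithLp.toLp 2 (fun i => (z i : ℝ))

/-- The unit cube `[0,1]ⁿ ⊆ ℝⁿ`. -/
def unitCube (n : ℕ) : Set (EuclideanSpace ℝ (Fin n)) :=
  {x | ∀ i, x i ∈ Set.Icc (0 : ℝ) 1}

section Aux

variable {n : ℕ}

lemma latticeEmbed_sub (a b : Fin n → ℤ) :
    latticeEmbed (a - b) = latticeEmbed a - latticeEmbed b := by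
  ext i
  simp only [latticeEmbed, PiLp.sub_apply, Pi.sub_apply]
  push_cast
  ring

/-- An axis-parallel box in Euclidean space. -/
def euclBox (L U : Fin n → ℝ) : Set (EuclideanSpace ℝ (Fin n)) :=
  {y | ∀ i, y i ∈ Set.Icc (L i) (U i)}

lemma euclBox_eq_preimage (L U : Fin n → ℝ) :
    euclBox L U = (MeasurableEquiv.toLp 2 (Fin n → ℝ)).symm ⁻¹' (Set.Icc L U) := by
  ext y
  simp only [euclBox, Set.mem_setOf_eq, Set.mem_preimage, Set.mem_Icc,
    MeasurableEquiv.coe_toLp_symm, Pi.le_def, forall_and]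

lemma volume_euclBox (L U : Fin n → ℝ) :
    volume (euclBox L U) = ∏ i, ENNReal.ofReal (U i - L i) := by
  rw [euclBox_eq_preimage,
    (EuclideanSpace.volume_preserving_symm_measurableEquiv_toLp (Fin n)).measure_preimage
      measurableSet_Icc.nullMeasurableSet, Real.volume_Icc_pi]

lemma measurableSet_euclBox (L U : Fin n → ℝ) : MeasurableSet (euclBox L U) := by
  rw [euclBox_eq_preimage]
  exact measurableSet_Icc.preimage (MeasurableEquiv.toLp 2 (Fin n → ℝ)).symm.measurable

lemma unitCube_eq : unitCube n = euclBox (fun _ => 0) (fun _ => 1) := rfl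

lemma vadd_euclBox (v : EuclideanSpace ℝ (Fin n)) (L U : Fin n → ℝ) :
    v +ᵥ euclBox L U = euclBox (fun i => L i + v i) (fun i => U i + v i) := by
  ext y
  rw [Set.mem_vadd_set_iff_neg_vadd_mem]
  simp only [euclBox, Set.mem_setOf_eq, Set.mem_Icc, vadd_eq_add, PiLp.add_apply, PiLp.neg_apply]
  constructor <;> intro h i <;> obtain ⟨h1, h2⟩ := h i <;> constructor <;> linarith

lemma volume_vadd (v : EuclideanSpace ℝ (Fin n)) (S : Set (EuclideanSpace ℝ (Fin n))) :
    volume (v +ᵥ S) = volume S := by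
  have h : v +ᵥ S = (fun y => -v + y) ⁻¹' S := by
    ext y
    rw [Set.mem_vadd_set_iff_neg_vadd_mem]
    rfl
  rw [h, measure_preimage_add]

lemma volume_unitCube : volume (unitCube n) = 1 := by
  rw [unitCube_eq, volume_euclBox]
  simp

lemma measurableSet_unitCube : MeasurableSet (unitCube n) := by
  rw [unitCube_eq]; exact measurableSet_euclBox _ _

lemma measurableSet_vadd_unitCube (v : EuclideanSpace ℝ (Fin n)) :
    MeasurableSet (v +ᵥ unitCube n) := by
  rw [unitCube_eq, vadd_euclBox]; exact measurableSet_euclBox _ _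

lemma latticeEmbed_apply (a : Fin n → ℤ) (i : Fin n) : latticeEmbed a i = (a i : ℝ) := rfl

lemma volume_inter_cubes_zero {a b : Fin n → ℤ} (h : a ≠ b) :
    volume ((latticeEmbed a +ᵥ unitCube n) ∩ (latticeEmbed b +ᵥ unitCube n)) = 0 := by
  obtain ⟨i, hi⟩ := Function.ne_iff.mp h
  have hsub : (latticeEmbed a +ᵥ unitCube n) ∩ (latticeEmbed b +ᵥ unitCube n) ⊆
      euclBox (fun j => max (a j : ℝ) (b j)) (fun j => min (a j : ℝ) (b j) + 1) := by
    rw [unitCube_eq, vadd_euclBox, vadd_euclBox]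
    rintro y ⟨h1, h2⟩ j
    have h1j := h1 j
    have h2j := h2 j
    simp only [Set.mem_Icc, latticeEmbed_apply] at h1j h2j
    simp only [Set.mem_Icc, le_min_iff, max_le_iff]
    refine ⟨⟨by linarith [h1j.1], by linarith [h2j.1]⟩, ?_⟩
    have hmin : y j - 1 ≤ min (a j : ℝ) (b j) :=
      le_min (by linarith [h1j.2]) (by linarith [h2j.2])
    simp only [min_def] at hmin ⊢
    split <;> split at hmin <;> linarith
  refine measure_mono_null hsub ?_
  rw [volume_euclBox]
  refine Finset.prod_eq_zero (Finset.mem_univ i) (ENNReal.ofReal_eq_zero.mpr ?_)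
  rcases hi.lt_or_gt with hlt | hlt
  · have h1 : (a i : ℝ) + 1 ≤ (b i : ℝ) := by exact_mod_cast Int.lt_iff_add_one_le.mp hlt
    have h2 := min_le_left (a i : ℝ) (b i)
    have h3 := le_max_right (a i : ℝ) (b i)
    linarith
  · have h1 : (b i : ℝ) + 1 ≤ (a i : ℝ) := by exact_mod_cast Int.lt_iff_add_one_le.mp hlt
    have h2 := min_le_right (a i : ℝ) (b i)
    have h3 := le_max_left (a i : ℝ) (b i)
    linarith

lemma image_add_eq_vadd (x : EuclideanSpace ℝ (Fin n)) (S : Set (EuclideanSpace ℝ (Fin n))) :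
    (· + x) '' S = x +ᵥ S := by
  have h : (· + x) = (fun y => x +ᵥ y : EuclideanSpace ℝ (Fin n) → _) := by
    funext y; exact add_comm y x
  rw [h, Set.image_vadd]

lemma piece_eq (a b : Fin n → ℤ) (x : EuclideanSpace ℝ (Fin n)) :
    (latticeEmbed a +ᵥ unitCube n) ∩ ((x + latticeEmbed b) +ᵥ unitCube n) =
      latticeEmbed a +ᵥ (unitCube n ∩ ((latticeEmbed (b - a) + x) +ᵥ unitCube n)) := by
  rw [Set.vadd_set_inter, vadd_vadd]
  congr 2
  rw [latticeEmbed_sub]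
  abel

lemma covariogram_piece (a b : Fin n → ℤ) (x : EuclideanSpace ℝ (Fin n)) :
    (volume ((latticeEmbed a +ᵥ unitCube n) ∩ ((x + latticeEmbed b) +ᵥ unitCube n))).toReal =
      covariogram (unitCube n) (latticeEmbed (b - a) + x) := by
  rw [piece_eq, volume_vadd, covariogram, image_add_eq_vadd]

end Aux

/-- For a finite `A ⊆ ℤⁿ`, with `Ā = A + [0,1]ⁿ` and `Q = [0,1]ⁿ`, one has
`g_Ā(x) = Σ_{z ∈ ℤⁿ} |A ∩ (A + z)| g_Q(z + x)` for every `x ∈ ℝⁿ`. -/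
theorem covariogram_animal_sum {n : ℕ} (A : Finset (Fin n → ℤ))
    (x : EuclideanSpace ℝ (Fin n)) :
    covariogram (latticeEmbed '' ↑A + unitCube n) x =
      ∑ᶠ z : Fin n → ℤ,
        ((A ∩ A.image (· + z)).card : ℝ) * covariogram (unitCube n) (latticeEmbed z + x) := by
  classical
  set Q := unitCube n with hQ
  -- decomposition of the grid polyomino as a union of cubes
  have hA : latticeEmbed '' (A : Set (Fin n → ℤ)) + Q = ⋃ a ∈ A, latticeEmbed a +ᵥ Q := by
    ext y
    simp only [Set.mem_add, Set.mem_iUnion, Set.mem_image, Finset.mem_coe,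
      Set.mem_vadd_set, vadd_eq_add, exists_prop]
    constructor
    · rintro ⟨-, ⟨a, ha, rfl⟩, q, hq, rfl⟩; exact ⟨a, ha, q, hq, rfl⟩
    · rintro ⟨a, ha, q, hq, rfl⟩; exact ⟨_, ⟨a, ha, rfl⟩, q, hq, rfl⟩
  have himg : (· + x) '' (⋃ a ∈ A, latticeEmbed a +ᵥ Q)
      = ⋃ b ∈ A, (x + latticeEmbed b) +ᵥ Q := by
    rw [image_add_eq_vadd]
    simp_rw [Set.vadd_set_iUnion₂, vadd_vadd]
  have hint : (⋃ a ∈ A, latticeEmbed a +ᵥ Q) ∩ (⋃ b ∈ A, (x + latticeEmbed b) +ᵥ Q)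
      = ⋃ p ∈ A ×ˢ A, (latticeEmbed p.1 +ᵥ Q) ∩ ((x + latticeEmbed p.2) +ᵥ Q) := by
    ext y
    simp only [Set.mem_inter_iff, Set.mem_iUnion, Finset.mem_coe, Finset.mem_product, exists_prop]
    constructor
    · rintro ⟨⟨a, ha, hya⟩, ⟨b, hb, hyb⟩⟩; exact ⟨(a, b), ⟨ha, hb⟩, hya, hyb⟩
    · rintro ⟨⟨a, b⟩, ⟨ha, hb⟩, hya, hyb⟩; exact ⟨⟨a, ha, hya⟩, ⟨b, hb, hyb⟩⟩
  have hdisj : (↑(A ×ˢ A) : Set ((Fin n → ℤ) × (Fin n → ℤ))).Pairwise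
      (Function.onFun (AEDisjoint volume) fun p => (latticeEmbed p.1 +ᵥ Q) ∩ ((x + latticeEmbed p.2) +ᵥ Q)) := by
    rintro p - q - hpq
    show volume _ = 0
    by_cases h1 : p.1 = q.1
    · have h2 : p.2 ≠ q.2 := fun h2 => hpq (Prod.ext h1 h2)
      refine measure_mono_null
        (Set.inter_subset_inter Set.inter_subset_right Set.inter_subset_right) ?_
      have heq : ((x + latticeEmbed p.2) +ᵥ Q) ∩ ((x + latticeEmbed q.2) +ᵥ Q)
          = x +ᵥ ((latticeEmbed p.2 +ᵥ Q) ∩ (latticeEmbed q.2 +ᵥ Q)) := by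
        rw [Set.vadd_set_inter, vadd_vadd, vadd_vadd]
      rw [heq, volume_vadd]
      exact volume_inter_cubes_zero h2
    · exact measure_mono_null
        (Set.inter_subset_inter Set.inter_subset_left Set.inter_subset_left)
        (volume_inter_cubes_zero h1)
  have hfin : ∀ p : (Fin n → ℤ) × (Fin n → ℤ),
      volume ((latticeEmbed p.1 +ᵥ Q) ∩ ((x + latticeEmbed p.2) +ᵥ Q)) ≠ ⊤ := by
    intro p
    refine ne_top_of_le_ne_top ?_ (measure_mono Set.inter_subset_left)
    rw [volume_vadd, hQ, volume_unitCube]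
    exact ENNReal.one_ne_top
  have key : covariogram (latticeEmbed '' ↑A + Q) x
      = ∑ p ∈ A ×ˢ A, covariogram Q (latticeEmbed (p.2 - p.1) + x) := by
    rw [covariogram, hA, himg, hint,
      measure_biUnion_finset₀ hdisj
        (fun p _ => ((measurableSet_vadd_unitCube _).inter
          (measurableSet_vadd_unitCube _)).nullMeasurableSet),
      ENNReal.toReal_sum (fun p _ => hfin p)]
    exact Finset.sum_congr rfl fun p _ => covariogram_piece p.1 p.2 x
  set D := (A ×ˢ A).image (fun p : (Fin n → ℤ) × (Fin n → ℤ) => p.2 - p.1) with hD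
  have hsupp : (Function.support fun z =>
      ((A ∩ A.image (· + z)).card : ℝ) * covariogram Q (latticeEmbed z + x)) ⊆ ↑D := by
    intro z hz
    rw [Function.mem_support] at hz
    have hcard : (A ∩ A.image (· + z)).Nonempty := by
      rw [Finset.nonempty_iff_ne_empty]
      intro h0
      exact hz (by rw [h0]; simp)
    obtain ⟨c, hc⟩ := hcard
    rw [Finset.mem_inter] at hc
    obtain ⟨hcA, hcI⟩ := hc
    obtain ⟨b, hb, rfl⟩ := Finset.mem_image.mp hcI
    exact Finset.mem_coe.mpr (Finset.mem_image.mpr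
      ⟨(b, b + z), Finset.mem_product.mpr ⟨hb, hcA⟩, by simp⟩)
  have hcardeq : ∀ z : Fin n → ℤ,
      ((A ×ˢ A).filter (fun p => p.2 - p.1 = z)).card = (A ∩ A.image (· + z)).card := by
    intro z
    refine Finset.card_nbij (fun p => p.2) ?_ ?_ ?_
    · intro p hp
      simp only [Finset.mem_coe, Finset.mem_filter, Finset.mem_product] at hp
      obtain ⟨⟨h1, h2⟩, h3⟩ := hp
      refine Finset.mem_inter.mpr ⟨h2, Finset.mem_image.mpr ⟨p.1, h1, ?_⟩⟩
      rw [← h3]; abel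
    · intro p hp q hq hpq
      simp only [Finset.mem_coe, Finset.mem_filter] at hp hq
      simp only at hpq
      have e1 := hp.2
      rw [hpq] at e1
      have h1 : q.2 - p.1 = q.2 - q.1 := e1.trans hq.2.symm
      exact Prod.ext (sub_right_inj.mp h1) hpq
    · intro c hc
      simp only [Finset.mem_coe, Finset.mem_inter] at hc
      obtain ⟨hcA, hcI⟩ := hc
      obtain ⟨b, hb, rfl⟩ := Finset.mem_image.mp hcI
      refine ⟨(b, b + z), ?_, rfl⟩
      simp only [Finset.mem_coe, Finset.mem_filter, Finset.mem_product]
      exact ⟨⟨hb, hcA⟩, add_sub_cancel_left b z⟩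
  rw [key, finsum_eq_sum_of_support_subset _ hsupp,
    ← Finset.sum_fiberwise_of_maps_to (g := fun p : (Fin n → ℤ) × (Fin n → ℤ) => p.2 - p.1)
      (fun p hp => Finset.mem_image_of_mem _ hp)
      (fun p => covariogram Q (latticeEmbed (p.2 - p.1) + x))]
  refine Finset.sum_congr rfl fun z hz => ?_
  rw [Finset.sum_congr rfl (fun p hp => by rw [(Finset.mem_filter.mp hp).2]),
    Finset.sum_const, nsmul_eq_mul, hcardeq z]
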